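/- Let (f_n) be a sequence of functions f_n : ℝ → [0,∞) such that each f_n is increasing on (−∞,0], decreasing on [0,∞), ∫_ℝ f_n(x) dx = 1, and for every δ > 0, lim_{n→∞} ∫_{[−δ,δ]} f_n(x) dx = 1. If X ⊆ ℝ is a Borel set with 0 ∈ X and 0 a Lebesgue point of χ_X (i.e. lim_{r→0+}(1/(2r))·ℓ(X∩[−r,r]) = 1), then lim_{n→∞} ∫_X f_n(x) dx = 1. -/

import Mathlib

open MeasureTheory Filter Topology

/-- If each `f n : ℝ → [0,∞)` is increasing on `(-∞,0]`, decreasing on `[0,∞)`,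
has total integral `1`, and concentrates at `0` (`∫_{[-δ,δ]} f n → 1` for every `δ > 0`),
and if `0 ∈ X` is a Lebesgue point of `χ_X`, then `∫_X f n → 1`. -/
theorem stmt2 (f : ℕ → ℝ → ℝ) (hpos : ∀ n x, 0 ≤ f n x)
    (hmono₁ : ∀ n, ∀ x y : ℝ, x ≤ y → y ≤ 0 → f n x ≤ f n y)
    (hmono₂ : ∀ n, ∀ x y : ℝ, 0 ≤ x → x ≤ y → f n y ≤ f n x)
    (hint : ∀ n, ∫ x : ℝ, f n x = 1)
    (hconc : ∀ δ : ℝ, 0 < δ →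
      Tendsto (fun n => ∫ x in Set.Icc (-δ) δ, f n x) atTop (𝓝 1))
    (X : Set ℝ) (hX : MeasurableSet X) (h0 : (0 : ℝ) ∈ X)
    (hleb : Tendsto (fun r : ℝ => (volume (X ∩ Set.Icc (-r) r)).toReal / (2 * r))
      (𝓝[>] (0 : ℝ)) (𝓝 1)) :
    Tendsto (fun n => ∫ x in X, f n x) atTop (𝓝 1) := by
  -- measurability of each `f n`
  have hOrd : ∀ n t, Set.OrdConnected (f n ⁻¹' Set.Ioi t) := by
    intro n t
    constructor
    intro x hx y hy z hz
    rcases le_or_gt z 0 with h | h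
    · exact lt_of_lt_of_le hx (hmono₁ n x z hz.1 h)
    · exact lt_of_lt_of_le hy (hmono₂ n z y h.le hz.2)
  have hmeas : ∀ n, Measurable (f n) := fun n =>
    measurable_of_Ioi (fun t => (hOrd n t).measurableSet)
  have hInt : ∀ n, Integrable (f n) := by
    intro n
    by_contra h
    have h1 := hint n
    rw [integral_undef h] at h1
    exact one_ne_zero h1.symm
  have htot : ∀ n, ∫⁻ x, ENNReal.ofReal (f n x) = 1 := by
    intro n
    rw [← ofReal_integral_eq_lintegral_ofReal (hInt n)
      (Filter.Eventually.of_forall (hpos n)), hint n, ENNReal.ofReal_one]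
  -- from the Lebesgue-point hypothesis: small complement measure on small intervals
  have hXc : ∀ ε : ℝ, 0 < ε → ∃ r₀ > 0, ∀ r : ℝ, 0 < r → r ≤ r₀ →
      volume (Xᶜ ∩ Set.Icc (-r) r) ≤ ENNReal.ofReal (ε * (2 * r)) := by
    intro ε hε
    have hmem : {r : ℝ | 1 - ε < (volume (X ∩ Set.Icc (-r) r)).toReal / (2 * r)}
        ∈ 𝓝[>] (0 : ℝ) := hleb (Ioi_mem_nhds (by linarith))
    obtain ⟨u, hu, hsub⟩ := mem_nhdsGT_iff_exists_Ioc_subset.mp hmem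
    refine ⟨u, hu, fun r hr hru => ?_⟩
    have hratio : 1 - ε < (volume (X ∩ Set.Icc (-r) r)).toReal / (2 * r) :=
      hsub ⟨hr, hru⟩
    have h2r : (0:ℝ) < 2 * r := by linarith
    have hIcc : volume (Set.Icc (-r) r) = ENNReal.ofReal (2 * r) := by
      rw [Real.volume_Icc]; ring_nf
    have hsplit : volume (Set.Icc (-r) r ∩ X) + volume (Set.Icc (-r) r \ X)
        = volume (Set.Icc (-r) r) := measure_inter_add_diff _ hX
    have hfin1 : volume (Set.Icc (-r) r ∩ X) ≠ ⊤ := by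
      refine ne_top_of_le_ne_top ?_ (measure_mono Set.inter_subset_left)
      rw [hIcc]; exact ENNReal.ofReal_ne_top
    have hfin2 : volume (Set.Icc (-r) r \ X) ≠ ⊤ := by
      refine ne_top_of_le_ne_top ?_ (measure_mono Set.diff_subset)
      rw [hIcc]; exact ENNReal.ofReal_ne_top
    have hXr : (1 - ε) * (2 * r) < (volume (X ∩ Set.Icc (-r) r)).toReal :=
      (lt_div_iff₀ h2r).mp hratio
    have htoReal : (volume (Set.Icc (-r) r ∩ X)).toReal
        + (volume (Set.Icc (-r) r \ X)).toReal = 2 * r := by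
      rw [← ENNReal.toReal_add hfin1 hfin2, hsplit, hIcc,
        ENNReal.toReal_ofReal h2r.le]
    have hcmm : Set.Icc (-r) r ∩ X = X ∩ Set.Icc (-r) r := Set.inter_comm _ _
    have hdiffle : (volume (Set.Icc (-r) r \ X)).toReal ≤ ε * (2 * r) := by
      rw [hcmm] at htoReal
      nlinarith
    have : Xᶜ ∩ Set.Icc (-r) r = Set.Icc (-r) r \ X := by
      rw [Set.diff_eq_compl_inter]
    rw [this]
    exact (ENNReal.le_ofReal_iff_toReal_le hfin2 (by positivity)).mpr hdiffle
  -- key estimate via layer cake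
  have hkey : ∀ ε : ℝ, 0 < ε → ∀ r₀ : ℝ, 0 < r₀ →
      (∀ r : ℝ, 0 < r → r ≤ r₀ →
        volume (Xᶜ ∩ Set.Icc (-r) r) ≤ ENNReal.ofReal (ε * (2 * r))) →
      ∀ n, ∫⁻ x in Xᶜ ∩ Set.Icc (-(r₀/2)) (r₀/2), ENNReal.ofReal (f n x)
        ≤ ENNReal.ofReal (2 * ε) := by
    intro ε hε r₀ hr₀ hb n
    set δ := r₀ / 2 with hδdef
    have hδ : 0 < δ := by positivity
    set T : Set ℝ := Set.Icc (-δ) δ with hT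
    set S : Set ℝ := Xᶜ ∩ T with hS
    have hmeas_t : ∀ t : ℝ, MeasurableSet {a : ℝ | t < f n a} := fun t =>
      measurableSet_lt measurable_const (hmeas n)
    have hlcS : ∫⁻ x in S, ENNReal.ofReal (f n x)
        = ∫⁻ t in Set.Ioi (0:ℝ), volume ({a : ℝ | t < f n a} ∩ S) := by
      rw [lintegral_eq_lintegral_meas_lt (volume.restrict S)
        (Filter.Eventually.of_forall (hpos n)) (hmeas n).aemeasurable]
      refine lintegral_congr fun t => ?_
      rw [Measure.restrict_apply (hmeas_t t)]
    have hlcT : ∫⁻ x in T, ENNReal.ofReal (f n x)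
        = ∫⁻ t in Set.Ioi (0:ℝ), volume ({a : ℝ | t < f n a} ∩ T) := by
      rw [lintegral_eq_lintegral_meas_lt (volume.restrict T)
        (Filter.Eventually.of_forall (hpos n)) (hmeas n).aemeasurable]
      refine lintegral_congr fun t => ?_
      rw [Measure.restrict_apply (hmeas_t t)]
    have hpt : ∀ t : ℝ, volume ({a : ℝ | t < f n a} ∩ S)
        ≤ ENNReal.ofReal (2 * ε) * volume ({a : ℝ | t < f n a} ∩ T) := by
      intro t
      set I : Set ℝ := {a : ℝ | t < f n a} ∩ T with hI
      have hIT : I ⊆ T := Set.inter_subset_right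
      have hITvol : volume I ≤ ENNReal.ofReal (2 * δ) := by
        refine le_trans (measure_mono hIT) ?_
        rw [hT, Real.volume_Icc]
        apply le_of_eq; congr 1; ring
      have hIfin : volume I ≠ ⊤ :=
        ne_top_of_le_ne_top ENNReal.ofReal_ne_top hITvol
      rcases Set.eq_empty_or_nonempty I with hIe | ⟨x, hxI⟩
      · have : {a : ℝ | t < f n a} ∩ S = ∅ := by
          rw [hS, ← Set.inter_assoc, Set.inter_comm _ Xᶜ, Set.inter_assoc, ← hI,
            hIe, Set.inter_empty]
        rw [this]; simp
      · -- 0 ∈ I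
        have h0T : (0:ℝ) ∈ T := ⟨by linarith, hδ.le⟩
        have hf0 : t < f n 0 := by
          rcases le_or_gt x 0 with hx | hx
          · exact lt_of_lt_of_le hxI.1 (hmono₁ n x 0 hx le_rfl)
          · exact lt_of_lt_of_le hxI.1 (hmono₂ n 0 x le_rfl hx.le)
        have h0I : (0:ℝ) ∈ I := ⟨hf0, h0T⟩
        have hIoc : Set.OrdConnected I := (hOrd n t).inter Set.ordConnected_Icc
        set r' : ℝ := (volume I).toReal with hr'
        have hr'nn : 0 ≤ r' := ENNReal.toReal_nonneg
        have hIsub : I ⊆ Set.Icc (-r') r' := by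
          intro z hz
          rcases le_or_gt 0 z with hz0 | hz0
          · have : Set.Icc (0:ℝ) z ⊆ I := hIoc.out h0I hz
            have hvz : ENNReal.ofReal z ≤ volume I := by
              calc ENNReal.ofReal z = volume (Set.Icc (0:ℝ) z) := by
                    rw [Real.volume_Icc]; ring_nf
                _ ≤ volume I := measure_mono this
            have : z ≤ r' := by
              rw [hr']
              calc z = (ENNReal.ofReal z).toReal := by
                    rw [ENNReal.toReal_ofReal hz0]
                _ ≤ (volume I).toReal := ENNReal.toReal_mono hIfin hvz
            exact ⟨by linarith, this⟩
          · have : Set.Icc z (0:ℝ) ⊆ I := hIoc.out hz h0I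
            have hvz : ENNReal.ofReal (-z) ≤ volume I := by
              calc ENNReal.ofReal (-z) = volume (Set.Icc z (0:ℝ)) := by
                    rw [Real.volume_Icc]; ring_nf
                _ ≤ volume I := measure_mono this
            have : -z ≤ r' := by
              rw [hr']
              calc -z = (ENNReal.ofReal (-z)).toReal := by
                    rw [ENNReal.toReal_ofReal (by linarith)]
                _ ≤ (volume I).toReal := ENNReal.toReal_mono hIfin hvz
            exact ⟨by linarith, by linarith⟩
        have hvolI : volume I = ENNReal.ofReal r' := by
          rw [hr', ENNReal.ofReal_toReal hIfin]
        have hset : {a : ℝ | t < f n a} ∩ S = Xᶜ ∩ I := by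
          rw [hS, hI, ← Set.inter_assoc, Set.inter_comm _ Xᶜ, Set.inter_assoc]
        rw [hset]
        rcases eq_or_lt_of_le hr'nn with hr'0 | hr'0
        · -- r' = 0, so volume I = 0
          have : volume I = 0 := by rw [hvolI, ← hr'0]; simp
          calc volume (Xᶜ ∩ I) ≤ volume I := measure_mono Set.inter_subset_right
            _ = 0 := this
            _ ≤ _ := zero_le
        · have hr'le : r' ≤ r₀ := by
            have h2 : r' ≤ 2 * δ := by
              have := ENNReal.toReal_mono ENNReal.ofReal_ne_top hITvol
              rwa [ENNReal.toReal_ofReal (by positivity)] at this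
            linarith
          calc volume (Xᶜ ∩ I)
              ≤ volume (Xᶜ ∩ Set.Icc (-r') r') :=
                measure_mono (Set.inter_subset_inter_right _ hIsub)
            _ ≤ ENNReal.ofReal (ε * (2 * r')) := hb r' hr'0 hr'le
            _ = ENNReal.ofReal (2 * ε) * ENNReal.ofReal r' := by
                rw [← ENNReal.ofReal_mul (by positivity)]; ring_nf
            _ = ENNReal.ofReal (2 * ε) * volume I := by rw [hvolI]
      -- end pointwise
    calc ∫⁻ x in S, ENNReal.ofReal (f n x)
        = ∫⁻ t in Set.Ioi (0:ℝ), volume ({a : ℝ | t < f n a} ∩ S) := hlcS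
      _ ≤ ∫⁻ t in Set.Ioi (0:ℝ),
            ENNReal.ofReal (2 * ε) * volume ({a : ℝ | t < f n a} ∩ T) :=
          lintegral_mono fun t => hpt t
      _ = ENNReal.ofReal (2 * ε) * ∫⁻ t in Set.Ioi (0:ℝ),
            volume ({a : ℝ | t < f n a} ∩ T) :=
          lintegral_const_mul' _ _ ENNReal.ofReal_ne_top
      _ = ENNReal.ofReal (2 * ε) * ∫⁻ x in T, ENNReal.ofReal (f n x) := by
          rw [hlcT]
      _ ≤ ENNReal.ofReal (2 * ε) * 1 := by
          gcongr
          rw [← htot n]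
          exact setLIntegral_le_lintegral _ _
      _ = ENNReal.ofReal (2 * ε) := mul_one _
  -- conclusion
  rw [Metric.tendsto_atTop]
  intro ε hε
  have hε6 : 0 < ε / 6 := by positivity
  obtain ⟨r₀, hr₀, hb⟩ := hXc (ε / 6) hε6
  set δ := r₀ / 2 with hδdef
  have hδ : 0 < δ := by positivity
  have hk := hkey (ε / 6) hε6 r₀ hr₀ hb
  obtain ⟨N, hN⟩ := Metric.tendsto_atTop.mp (hconc δ hδ) (ε / 6) hε6
  refine ⟨N, fun n hn => ?_⟩
  have hIccInt : IntegrableOn (f n) (Set.Icc (-δ) δ) := (hInt n).integrableOn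
  -- bound the excised part
  have hdiff : ∫ x in Set.Icc (-δ) δ \ X, f n x ≤ 2 * (ε / 6) := by
    have heq : Set.Icc (-δ) δ \ X = Xᶜ ∩ Set.Icc (-δ) δ :=
      Set.diff_eq_compl_inter
    have h1 : ∫ x in Set.Icc (-δ) δ \ X, f n x
        = (∫⁻ x in Set.Icc (-δ) δ \ X, ENNReal.ofReal (f n x)).toReal := by
      rw [integral_eq_lintegral_of_nonneg_ae
        (Filter.Eventually.of_forall (hpos n)) (hmeas n).aestronglyMeasurable]
    rw [h1, heq]
    exact ENNReal.toReal_le_of_le_ofReal (by positivity) (hk n)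
  have hsplit : (∫ x in Set.Icc (-δ) δ ∩ X, f n x)
      + ∫ x in Set.Icc (-δ) δ \ X, f n x = ∫ x in Set.Icc (-δ) δ, f n x :=
    integral_inter_add_diff hX hIccInt
  have hICC : 1 - ε / 6 < ∫ x in Set.Icc (-δ) δ, f n x := by
    have := hN n hn
    rw [Real.dist_eq, abs_lt] at this
    linarith [this.1]
  have hmono_set : ∫ x in Set.Icc (-δ) δ ∩ X, f n x ≤ ∫ x in X, f n x := by
    refine setIntegral_mono_set (hInt n).integrableOn
      (Filter.Eventually.of_forall (hpos n)) ?_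
    exact HasSubset.Subset.eventuallyLE Set.inter_subset_right
  have hle1 : ∫ x in X, f n x ≤ 1 := by
    rw [← hint n]
    exact setIntegral_le_integral (hInt n) (Filter.Eventually.of_forall (hpos n))
  have hlow : 1 - ε / 2 ≤ ∫ x in X, f n x := by
    have : 1 - ε / 6 - 2 * (ε / 6) < ∫ x in Set.Icc (-δ) δ ∩ X, f n x := by
      linarith
    linarith
  rw [Real.dist_eq, abs_lt]
  constructor <;> linarith
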